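/- Let (S, 𝒮) be a measurable space, let κ be a Markov kernel on S, let μ be a finite measure on S with μ(S) > 0, and let C > 0 be such that C·μ(S) ≤ 1 and κ(x, E) ≥ C·μ(E) for every x ∈ S and every measurable E ⊆ S. Let π be an invariant probability measure for κ. Then for every n ≥ 1, every x ∈ S, and every measurable E ⊆ S, one has |κⁿ(x, E) − π(E)| ≤ (1 − C·μ(S))ⁿ, where κⁿ denotes the n-fold composition of the kernel κ. -/

import Mathlib

open MeasureTheory ProbabilityTheory
open scoped ENNReal

/-- `kpow κ n` is the `n`-fold composition of the kernel `κ`, with `kpow κ 0` the identity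
kernel, so that `kpow κ 1 = κ` and `kpow κ (n+1) (x, E) = ∫ kpow κ n (y, E) κ(x, dy)`. -/
noncomputable def kpow {S : Type*} [MeasurableSpace S] (κ : Kernel S S) : ℕ → Kernel S S
  | 0 => Kernel.id
  | n + 1 => (kpow κ n) ∘ₖ κ

instance kpow_markov {S : Type*} [MeasurableSpace S] (κ : Kernel S S) [IsMarkovKernel κ]
    (n : ℕ) : IsMarkovKernel (kpow κ n) := by
  induction n with
  | zero => exact inferInstanceAs (IsMarkovKernel (Kernel.id : Kernel S S))
  | succ n ih => exact inferInstanceAs (IsMarkovKernel ((kpow κ n) ∘ₖ κ))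

theorem stmt_9 {S : Type*} [MeasurableSpace S] (κ : Kernel S S) [IsMarkovKernel κ]
    (μ : Measure S) [IsFiniteMeasure μ] (hμ : 0 < μ Set.univ) (C : ℝ) (hC : 0 < C)
    (hC1 : C * (μ Set.univ).toReal ≤ 1)
    (hmin : ∀ x : S, ∀ E : Set S, MeasurableSet E → ENNReal.ofReal C * μ E ≤ κ x E)
    (π : Measure S) [IsProbabilityMeasure π] (hπ : π.bind κ = π) :
    ∀ n : ℕ, 1 ≤ n → ∀ x : S, ∀ E : Set S, MeasurableSet E →
      |(kpow κ n x E).toReal - (π E).toReal| ≤ (1 - C * (μ Set.univ).toReal) ^ n := by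
  intro n _hn x E hE
  haveI : Nonempty S := ⟨x⟩
  set δ : ℝ := C * (μ Set.univ).toReal with hδdef
  have hδ0 : 0 ≤ δ := mul_nonneg hC.le ENNReal.toReal_nonneg
  have h1δ : 0 ≤ 1 - δ := by linarith
  -- the minorizing measure
  set ν : Measure S := (ENNReal.ofReal C) • μ with hνdef
  have hνle : ∀ z : S, ν ≤ κ z := by
    intro z
    rw [Measure.le_iff]
    intro s hs
    simpa [hνdef] using hmin z s hs
  haveI : IsFiniteMeasure ν := by
    constructor
    rw [hνdef]
    simp only [Measure.smul_apply, smul_eq_mul]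
    exact ENNReal.mul_lt_top ENNReal.ofReal_lt_top (measure_lt_top μ _)
  have hνuniv_ne : ν Set.univ ≠ ∞ := (measure_lt_top ν _).ne
  have hνtoReal : (ν Set.univ).toReal = δ := by
    rw [hνdef]
    simp [ENNReal.toReal_mul, ENNReal.toReal_ofReal hC.le]
    exact hδdef.symm
  have hνle1 : ν Set.univ ≤ 1 := by
    rw [← ENNReal.ofReal_one, ← ENNReal.ofReal_toReal hνuniv_ne]
    exact ENNReal.ofReal_le_ofReal (by rw [hνtoReal]; exact hC1)
  -- finiteness of kernel values
  have hfin : ∀ (m : ℕ) (z : S), kpow κ m z E ≤ 1 := fun m z => prob_le_one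
  have hfinne : ∀ (m : ℕ) (z : S), kpow κ m z E ≠ ∞ :=
    fun m z => ((hfin m z).trans_lt ENNReal.one_lt_top).ne
  have hsucc : ∀ (m : ℕ) (u : S), kpow κ (m+1) u E = ∫⁻ v, kpow κ m v E ∂(κ u) := by
    intro m u
    show ((kpow κ m) ∘ₖ κ) u E = _
    exact Kernel.comp_apply' _ _ _ hE
  -- key contraction estimate
  have key : ∀ m : ℕ, ∀ z w : S,
      (kpow κ m z E).toReal - (kpow κ m w E).toReal ≤ (1 - δ) ^ m := by
    intro m
    induction m with
    | zero =>
      intro z w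
      simp only [pow_zero]
      have h1 : (kpow κ 0 z E).toReal ≤ 1 := by
        rw [← ENNReal.toReal_one]
        exact ENNReal.toReal_mono ENNReal.one_ne_top (hfin 0 z)
      have h2 : 0 ≤ (kpow κ 0 w E).toReal := ENNReal.toReal_nonneg
      linarith
    | succ m ih =>
      intro z w
      set g : S → ℝ := fun u => (kpow κ m u E).toReal with hgdef
      have hg01 : ∀ u, 0 ≤ g u ∧ g u ≤ 1 := by
        intro u
        refine ⟨ENNReal.toReal_nonneg, ?_⟩
        rw [hgdef, ← ENNReal.toReal_one]
        exact ENNReal.toReal_mono ENNReal.one_ne_top (hfin m u)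
      have hbddA : BddAbove (Set.range g) := ⟨1, by rintro _ ⟨u, rfl⟩; exact (hg01 u).2⟩
      have hbddB : BddBelow (Set.range g) := ⟨0, by rintro _ ⟨u, rfl⟩; exact (hg01 u).1⟩
      have hrne : (Set.range g).Nonempty := Set.range_nonempty g
      set M : ℝ := sSup (Set.range g) with hMdef
      set mm : ℝ := sInf (Set.range g) with hmmdef
      have hMm : M - mm ≤ (1 - δ) ^ m := by
        have hM : M ≤ (1 - δ) ^ m + mm := by
          apply csSup_le hrne
          rintro _ ⟨u, rfl⟩
          have : g u - (1 - δ) ^ m ≤ mm := by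
            apply le_csInf hrne
            rintro _ ⟨v, rfl⟩
            have := ih u v
            linarith
          linarith
        linarith
      have hm0 : 0 ≤ mm := le_csInf hrne (by rintro _ ⟨u, rfl⟩; exact (hg01 u).1)
      have hM0 : 0 ≤ M := hm0.trans (csInf_le_csSup hrne hbddB hbddA)
      -- decomposition
      have hmass : ∀ u : S, (κ u - ν) Set.univ = 1 - ν Set.univ := by
        intro u
        rw [Measure.sub_apply MeasurableSet.univ (hνle u), measure_univ]
      have hmass_ne : ∀ u : S, (κ u - ν) Set.univ ≠ ∞ := by
        intro u
        rw [hmass u]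
        exact ((tsub_le_self).trans_lt ENNReal.one_lt_top).ne
      have hmassR : ∀ u : S, ((κ u - ν) Set.univ).toReal = 1 - δ := by
        intro u
        rw [hmass u, ENNReal.toReal_sub_of_le hνle1 ENNReal.one_ne_top,
          ENNReal.toReal_one, hνtoReal]
      have hub : ∀ u : S, ∫⁻ v, kpow κ m v E ∂(κ u - ν) ≤ ENNReal.ofReal M * (κ u - ν) Set.univ := by
        intro u
        calc ∫⁻ v, kpow κ m v E ∂(κ u - ν)
            ≤ ∫⁻ _, ENNReal.ofReal M ∂(κ u - ν) := by
              apply lintegral_mono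
              intro v
              dsimp only
              rw [← ENNReal.ofReal_toReal (hfinne m v)]
              exact ENNReal.ofReal_le_ofReal (le_csSup hbddA ⟨v, rfl⟩)
          _ = ENNReal.ofReal M * (κ u - ν) Set.univ := lintegral_const _
      have hRfin : ∀ u : S, ∫⁻ v, kpow κ m v E ∂(κ u - ν) ≠ ∞ := by
        intro u
        exact ((hub u).trans_lt
          (ENNReal.mul_lt_top ENNReal.ofReal_lt_top (hmass_ne u).lt_top)).ne
      have hcfin : ∫⁻ v, kpow κ m v E ∂ν ≠ ∞ := by
        refine ((lintegral_mono fun v => hfin m v).trans_lt ?_).ne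
        rw [lintegral_const, one_mul]
        exact hνuniv_ne.lt_top
      have hdec : ∀ u : S, (kpow κ (m+1) u E).toReal
          = (∫⁻ v, kpow κ m v E ∂(κ u - ν)).toReal + (∫⁻ v, kpow κ m v E ∂ν).toReal := by
        intro u
        rw [hsucc m u]
        conv_lhs => rw [← Measure.sub_add_cancel_of_le (hνle u)]
        rw [lintegral_add_measure, ENNReal.toReal_add (hRfin u) hcfin]
      -- upper bound for z
      have hA : (∫⁻ v, kpow κ m v E ∂(κ z - ν)).toReal ≤ M * (1 - δ) := by
        have h2 := ENNReal.toReal_mono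
          (ENNReal.mul_ne_top ENNReal.ofReal_ne_top (hmass_ne z)) (hub z)
        rwa [ENNReal.toReal_mul, ENNReal.toReal_ofReal hM0, hmassR z] at h2
      -- lower bound for w
      have hB : mm * (1 - δ) ≤ (∫⁻ v, kpow κ m v E ∂(κ w - ν)).toReal := by
        have h1 : ENNReal.ofReal mm * (κ w - ν) Set.univ ≤ ∫⁻ v, kpow κ m v E ∂(κ w - ν) := by
          calc ENNReal.ofReal mm * (κ w - ν) Set.univ
              = ∫⁻ _, ENNReal.ofReal mm ∂(κ w - ν) := (lintegral_const _).symm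
            _ ≤ ∫⁻ v, kpow κ m v E ∂(κ w - ν) := by
                apply lintegral_mono
                intro v
                dsimp only
                rw [← ENNReal.ofReal_toReal (hfinne m v)]
                exact ENNReal.ofReal_le_ofReal (csInf_le hbddB ⟨v, rfl⟩)
        have h2 := ENNReal.toReal_mono (hRfin w) h1
        rwa [ENNReal.toReal_mul, ENNReal.toReal_ofReal hm0, hmassR w] at h2
      rw [hdec z, hdec w]
      have hpow : (1 - δ) ^ (m + 1) = (1 - δ) ^ m * (1 - δ) := pow_succ _ _
      have hmul : (M - mm) * (1 - δ) ≤ (1 - δ) ^ m * (1 - δ) :=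
        mul_le_mul_of_nonneg_right hMm h1δ
      nlinarith [hA, hB, hmul, hpow]
  -- invariance of π under kpow
  have hπn : ∀ m : ℕ, π E = ∫⁻ y, kpow κ m y E ∂π := by
    intro m
    induction m with
    | zero =>
      show π E = ∫⁻ y, Kernel.id y E ∂π
      simp only [Kernel.id_apply]
      rw [← lintegral_indicator_one hE]
      congr 1
      ext y
      rw [Measure.dirac_apply' y hE]
    | succ m ih =>
      have h1 : ∫⁻ y, kpow κ (m+1) y E ∂π = ∫⁻ y, ∫⁻ v, kpow κ m v E ∂(κ y) ∂π := by
        congr 1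
        ext y
        exact hsucc m y
      rw [h1, ← Measure.lintegral_bind (Kernel.measurable κ).aemeasurable (Kernel.measurable_coe _ hE).aemeasurable, hπ,
        ← ih]
  have hπE : π E = ∫⁻ y, kpow κ n y E ∂π := hπn n
  set b : ℝ := (1 - δ) ^ n with hbdef
  have hb0 : 0 ≤ b := pow_nonneg h1δ n
  rw [abs_sub_le_iff]
  constructor
  · -- kpow n x E - π E ≤ b
    have hlow : ENNReal.ofReal ((kpow κ n x E).toReal - b) ≤ π E := by
      rw [hπE]
      calc ENNReal.ofReal ((kpow κ n x E).toReal - b)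
          = ∫⁻ _, ENNReal.ofReal ((kpow κ n x E).toReal - b) ∂π := by
            rw [lintegral_const, measure_univ, mul_one]
        _ ≤ ∫⁻ y, kpow κ n y E ∂π := by
            apply lintegral_mono
            intro y
            dsimp only
            rw [← ENNReal.ofReal_toReal (hfinne n y)]
            exact ENNReal.ofReal_le_ofReal (by have := key n x y; linarith)
    have h2 := ENNReal.toReal_mono (measure_ne_top π E) hlow
    have h3 : (kpow κ n x E).toReal - b
        ≤ (ENNReal.ofReal ((kpow κ n x E).toReal - b)).toReal := by
      rw [ENNReal.toReal_ofReal']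
      exact le_max_left _ _
    linarith
  · -- π E - kpow n x E ≤ b
    have hup : π E ≤ ENNReal.ofReal ((kpow κ n x E).toReal + b) := by
      rw [hπE]
      calc ∫⁻ y, kpow κ n y E ∂π
          ≤ ∫⁻ _, ENNReal.ofReal ((kpow κ n x E).toReal + b) ∂π := by
            apply lintegral_mono
            intro y
            dsimp only
            rw [← ENNReal.ofReal_toReal (hfinne n y)]
            exact ENNReal.ofReal_le_ofReal (by have := key n y x; linarith)
        _ = _ := by rw [lintegral_const, measure_univ, mul_one]
    have h2 := ENNReal.toReal_mono ENNReal.ofReal_ne_top hup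
    rw [ENNReal.toReal_ofReal (by positivity)] at h2
    linarith
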